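/- Let Q ⊆ ℝ be a Borel set and let P_1, P_2 be probability distributions on ℝ with cdfs F_1, F_2 such that u ↦ (F_1(u) − 1_{z≤u})² is integrable over Q for P_2-almost every z, with integrable expectation. Define S(P, z) = ∫_Q (F_P(u) − 1_{z ≤ u})² du and S(P_1, P_2) = E_{Z∼P_2}[S(P_1, Z)]. Then S(P_1, P_2) − S(P_2, P_2) = ∫_Q (F_1(u) − F_2(u))² du ≥ 0; in particular the truncated CRPS is a proper scoring rule. -/

import Mathlib

open MeasureTheory

/-- propriety of the truncated CRPS. For Borel `Q ⊆ ℝ` and probability measures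
`P₁, P₂` with cdfs `F₁, F₂`, under the stated integrability assumptions,
`S(P₁,P₂) − S(P₂,P₂) = ∫_Q (F₁ − F₂)² ≥ 0`, where `S(P,z) = ∫_Q (F_P(u) − 1_{z≤u})² du` and
`S(P,P₂) = E_{Z∼P₂} S(P,Z)`. -/
theorem stmt7 (Q : Set ℝ) (hQ : MeasurableSet Q)
    (P₁ P₂ : Measure ℝ) [IsProbabilityMeasure P₁] [IsProbabilityMeasure P₂]
    (F₁ F₂ : ℝ → ℝ)
    (hF₁ : ∀ u, F₁ u = (P₁ (Set.Iic u)).toReal) (hF₂ : ∀ u, F₂ u = (P₂ (Set.Iic u)).toReal)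
    (hi₁ : ∀ᵐ z ∂P₂,
      IntegrableOn (fun u => (F₁ u - (if z ≤ u then (1 : ℝ) else 0)) ^ 2) Q volume)
    (hi₁' : Integrable
      (fun z => ∫ u in Q, (F₁ u - (if z ≤ u then (1 : ℝ) else 0)) ^ 2) P₂)
    (hi₂ : ∀ᵐ z ∂P₂,
      IntegrableOn (fun u => (F₂ u - (if z ≤ u then (1 : ℝ) else 0)) ^ 2) Q volume)
    (hi₂' : Integrable
      (fun z => ∫ u in Q, (F₂ u - (if z ≤ u then (1 : ℝ) else 0)) ^ 2) P₂) :
    (∫ z, (∫ u in Q, (F₁ u - (if z ≤ u then (1 : ℝ) else 0)) ^ 2) ∂P₂)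
      - (∫ z, (∫ u in Q, (F₂ u - (if z ≤ u then (1 : ℝ) else 0)) ^ 2) ∂P₂)
      = ∫ u in Q, (F₁ u - F₂ u) ^ 2 ∧
    0 ≤ ∫ u in Q, (F₁ u - F₂ u) ^ 2 := by
  have hsq : 0 ≤ ∫ u in Q, (F₁ u - F₂ u) ^ 2 :=
    integral_nonneg fun u => sq_nonneg _
  refine ⟨?_, hsq⟩
  -- measurability facts
  have hmF₁ : Measurable F₁ := by
    have hmono : Monotone F₁ := by
      intro a b hab
      rw [hF₁, hF₁]
      exact ENNReal.toReal_mono (measure_ne_top _ _)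
        (measure_mono (Set.Iic_subset_Iic.2 hab))
    exact hmono.measurable
  have hmF₂ : Measurable F₂ := by
    have hmono : Monotone F₂ := by
      intro a b hab
      rw [hF₂, hF₂]
      exact ENNReal.toReal_mono (measure_ne_top _ _)
        (measure_mono (Set.Iic_subset_Iic.2 hab))
    exact hmono.measurable
  have hχm : Measurable (fun p : ℝ × ℝ => if p.1 ≤ p.2 then (1 : ℝ) else 0) :=
    Measurable.ite (measurableSet_le measurable_fst measurable_snd)
      measurable_const measurable_const
  set ν := volume.restrict Q with hν
  have hmg₁ : Measurable (fun p : ℝ × ℝ =>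
      (F₁ p.2 - if p.1 ≤ p.2 then (1 : ℝ) else 0) ^ 2) :=
    ((hmF₁.comp measurable_snd).sub hχm).pow_const 2
  have hmg₂ : Measurable (fun p : ℝ × ℝ =>
      (F₂ p.2 - if p.1 ≤ p.2 then (1 : ℝ) else 0) ^ 2) :=
    ((hmF₂.comp measurable_snd).sub hχm).pow_const 2
  -- integrability on the product measure
  have hint₁ : Integrable (fun p : ℝ × ℝ =>
      (F₁ p.2 - if p.1 ≤ p.2 then (1 : ℝ) else 0) ^ 2) (P₂.prod ν) := by
    rw [integrable_prod_iff hmg₁.aestronglyMeasurable]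
    refine ⟨hi₁, ?_⟩
    refine hi₁'.congr (Filter.Eventually.of_forall fun z => ?_)
    simp only [Real.norm_eq_abs, abs_pow, sq_abs]
  have hint₂ : Integrable (fun p : ℝ × ℝ =>
      (F₂ p.2 - if p.1 ≤ p.2 then (1 : ℝ) else 0) ^ 2) (P₂.prod ν) := by
    rw [integrable_prod_iff hmg₂.aestronglyMeasurable]
    refine ⟨hi₂, ?_⟩
    refine hi₂'.congr (Filter.Eventually.of_forall fun z => ?_)
    simp only [Real.norm_eq_abs, abs_pow, sq_abs]
  have hintg : Integrable (fun p : ℝ × ℝ =>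
      (F₁ p.2 - if p.1 ≤ p.2 then (1 : ℝ) else 0) ^ 2
        - (F₂ p.2 - if p.1 ≤ p.2 then (1 : ℝ) else 0) ^ 2) (P₂.prod ν) :=
    hint₁.sub hint₂
  -- rewrite the LHS as a single double integral
  have h1 : (∫ z, (∫ u in Q, (F₁ u - (if z ≤ u then (1 : ℝ) else 0)) ^ 2) ∂P₂)
      - (∫ z, (∫ u in Q, (F₂ u - (if z ≤ u then (1 : ℝ) else 0)) ^ 2) ∂P₂)
      = ∫ z, (∫ u in Q, ((F₁ u - (if z ≤ u then (1 : ℝ) else 0)) ^ 2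
          - (F₂ u - (if z ≤ u then (1 : ℝ) else 0)) ^ 2)) ∂P₂ := by
    rw [← integral_sub hi₁' hi₂']
    refine integral_congr_ae ?_
    filter_upwards [hi₁, hi₂] with z h1 h2
    exact (integral_sub h1 h2).symm
  rw [h1]
  -- Fubini
  have h2 : ∫ z, (∫ u, ((F₁ u - (if z ≤ u then (1 : ℝ) else 0)) ^ 2
          - (F₂ u - (if z ≤ u then (1 : ℝ) else 0)) ^ 2) ∂ν) ∂P₂
      = ∫ u, (∫ z, ((F₁ u - (if z ≤ u then (1 : ℝ) else 0)) ^ 2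
          - (F₂ u - (if z ≤ u then (1 : ℝ) else 0)) ^ 2) ∂P₂) ∂ν :=
    integral_integral_swap hintg
  rw [h2]
  -- compute the inner integral
  have hz : ∀ u : ℝ, (∫ z, ((F₁ u - (if z ≤ u then (1 : ℝ) else 0)) ^ 2
      - (F₂ u - (if z ≤ u then (1 : ℝ) else 0)) ^ 2) ∂P₂) = (F₁ u - F₂ u) ^ 2 := by
    intro u
    have hpt : ∀ z : ℝ, ((F₁ u - (if z ≤ u then (1 : ℝ) else 0)) ^ 2
        - (F₂ u - (if z ≤ u then (1 : ℝ) else 0)) ^ 2)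
        = (F₁ u ^ 2 - F₂ u ^ 2)
          - (2 * (F₁ u - F₂ u)) * (Set.Iic u).indicator (fun _ => (1 : ℝ)) z := by
      intro z
      by_cases h : z ≤ u <;> simp [Set.indicator, Set.mem_Iic, h] <;> ring
    simp only [hpt]
    have hind : Integrable (fun z =>
        (2 * (F₁ u - F₂ u)) * (Set.Iic u).indicator (fun _ => (1 : ℝ)) z) P₂ :=
      ((integrable_const (1 : ℝ)).indicator measurableSet_Iic).const_mul _
    rw [integral_sub (integrable_const _) hind, integral_const,
      integral_const_mul, integral_indicator_const (1 : ℝ) measurableSet_Iic]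
    simp only [Measure.real, measure_univ, ENNReal.toReal_one, smul_eq_mul, one_smul, one_mul, mul_one]
    rw [← hF₂ u]
    ring
  simp only [hz]
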